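/- Let K ≥ 1, let y ∈ {-1,1}, let p_1,…,p_K ∈ (0,1), and let Z_1,…,Z_K be independent {-1,1}-valued random variables with P(Z_j = y) = p_j for each j. Define weights w_j = (1/2)·ln(p_j/(1−p_j)) and the aggregated prediction ŷ = sign(Σ_{j=1}^K w_j Z_j), with the convention sign(0) = 1. Then P(ŷ ≠ y) ≤ exp(−2 Σ_{j=1}^K (1/2 − p_j)²). -/

import Mathlib

open MeasureTheory ProbabilityTheory

noncomputable section

lemma my_lintegral_prod {Ω : Type*} [MeasurableSpace Ω] (μ : Measure Ω) [IsProbabilityMeasure μ]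
    {ι : Type*} (g : ι → Ω → ENNReal) (hg : ∀ i, Measurable (g i))
    (hind : iIndepFun g μ) (s : Finset ι) :
    ∫⁻ ω, ∏ j ∈ s, g j ω ∂μ = ∏ j ∈ s, ∫⁻ ω, g j ω ∂μ := by
  classical
  induction s using Finset.induction with
  | empty => simp
  | @insert i s hi ih =>
    have hfun : (∏ j ∈ s, g j) = fun ω => ∏ j ∈ s, g j ω := funext fun ω => by simp
    have hI : IndepFun (g i) (fun ω => ∏ j ∈ s, g j ω) μ := by
      have := (hind.indepFun_finset_prod_of_notMem hg hi).symm
      rwa [hfun] at this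
    have hmp : Measurable (fun ω => ∏ j ∈ s, g j ω) := Finset.measurable_prod s fun j _ => hg j
    simp only [Finset.prod_insert hi]
    rw [lintegral_mul_eq_lintegral_mul_lintegral_of_indepFun'' (hg i).aemeasurable
      hmp.aemeasurable hI, ih]

lemma my_key_real {p : ℝ} (hp : p ∈ Set.Ioo (0:ℝ) 1) :
    Real.exp (-((1/2) * Real.log (p / (1 - p)))) * p
      + Real.exp ((1/2) * Real.log (p / (1 - p))) * (1 - p)
      ≤ Real.exp (-2 * (1/2 - p)^2) := by
  obtain ⟨hp0, hp1⟩ := hp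
  have hq0 : 0 < 1 - p := by linarith
  set w := (1/2) * Real.log (p / (1 - p)) with hw
  set L := Real.exp (-w) * p + Real.exp w * (1 - p) with hL
  set t := (1/2 - p)^2 with ht
  have hew2 : Real.exp w ^ 2 = p / (1 - p) := by
    rw [sq, ← Real.exp_add]
    rw [show w + w = Real.log (p / (1 - p)) by rw [hw]; ring]
    exact Real.exp_log (by positivity)
  have henw2 : Real.exp (-w) ^ 2 = (1 - p) / p := by
    rw [sq, ← Real.exp_add]
    rw [show -w + -w = Real.log ((1 - p) / p) by
      rw [hw, show (1-p)/p = (p/(1-p))⁻¹ by rw [inv_div], Real.log_inv]; ring]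
    exact Real.exp_log (by positivity)
  have hprod : Real.exp (-w) * Real.exp w = 1 := by rw [← Real.exp_add]; simp
  have hL2 : L^2 = 4 * (p * (1 - p)) := by
    have : L^2 = Real.exp (-w)^2 * p^2 + 2 * (Real.exp (-w) * Real.exp w) * (p * (1-p))
        + Real.exp w ^2 * (1-p)^2 := by rw [hL]; ring
    rw [this, hew2, henw2, hprod]
    field_simp
    ring
  have h4 : 4 * (p * (1 - p)) ≤ Real.exp (-2 * t) ^ 2 := by
    have h1 : Real.exp (-2*t) ^ 2 = Real.exp (-4*t) := by
      rw [sq, ← Real.exp_add]; ring_nf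
    rw [h1]
    have := Real.add_one_le_exp (-4 * t)
    have h2 : 4 * (p * (1 - p)) = -4*t + 1 := by rw [ht]; ring
    linarith
  have hLnn : 0 ≤ L := by
    rw [hL]; positivity
  nlinarith [Real.exp_pos (-2 * t), hL2, h4]

/-- The sign function with the convention `sgn 0 = 1`. -/
def sgn (x : ℝ) : ℝ := if 0 ≤ x then 1 else -1

/-- Let `K ≥ 1`, `y ∈ {-1,1}`, `p_1,…,p_K ∈ (0,1)`, and let
`Z_1,…,Z_K` be independent `{-1,1}`-valued random variables with `P(Z_j = y) = p_j`.
With weights `w_j = (1/2)·ln(p_j/(1−p_j))` and aggregated prediction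
`ŷ = sign(∑_j w_j Z_j)` (with `sign 0 = 1`), one has
`P(ŷ ≠ y) ≤ exp(−2 ∑_j (1/2 − p_j)²)`. -/
theorem stmt0 {Ω : Type*} [MeasurableSpace Ω] (μ : Measure Ω) [IsProbabilityMeasure μ]
    (K : ℕ) (hK : 1 ≤ K) (y : ℝ) (hy : y = 1 ∨ y = -1)
    (p : Fin K → ℝ) (hp : ∀ j, p j ∈ Set.Ioo (0:ℝ) 1)
    (Z : Fin K → Ω → ℝ) (hZmeas : ∀ j, Measurable (Z j))
    (hZval : ∀ j ω, Z j ω = 1 ∨ Z j ω = -1)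
    (hindep : iIndepFun Z μ)
    (hprob : ∀ j, μ {ω | Z j ω = y} = ENNReal.ofReal (p j)) :
    μ {ω | sgn (∑ j, (1/2) * Real.log (p j / (1 - p j)) * Z j ω) ≠ y}
      ≤ ENNReal.ofReal (Real.exp (-2 * ∑ j, (1/2 - p j)^2)) := by
  classical
  have hy2 : y * y = 1 := by rcases hy with h | h <;> rw [h] <;> norm_num
  set g : Fin K → Ω → ENNReal :=
    fun j ω => ENNReal.ofReal (Real.exp (-(y * ((1/2) * Real.log (p j / (1 - p j)) * Z j ω))))
    with hgdef
  have hgmeas : ∀ j, Measurable (g j) := fun j =>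
    ENNReal.measurable_ofReal.comp
      (Real.measurable_exp.comp (((hZmeas j).const_mul _).const_mul y).neg)
  have hgind : iIndepFun g μ := by
    have := hindep.comp
      (fun j (x : ℝ) => ENNReal.ofReal (Real.exp (-(y * ((1/2) * Real.log (p j / (1 - p j)) * x)))))
      (fun j => ENNReal.measurable_ofReal.comp
        (Real.measurable_exp.comp ((measurable_id.const_mul _).const_mul y).neg))
    exact this
  -- Step 1: error set is contained in `{1 ≤ ∏ g_j}`
  have hsub : {ω | sgn (∑ j, (1/2) * Real.log (p j / (1 - p j)) * Z j ω) ≠ y}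
      ⊆ {ω | 1 ≤ ∏ j, g j ω} := by
    intro ω hω
    simp only [Set.mem_setOf_eq] at hω ⊢
    set S := ∑ j, (1/2) * Real.log (p j / (1 - p j)) * Z j ω with hS
    have hyS : y * S ≤ 0 := by
      rcases hy with h | h
      · subst h
        by_cases h0 : 0 ≤ S
        · exact absurd (by simp [sgn, h0]) hω
        · push_neg at h0; nlinarith
      · subst h
        by_cases h0 : 0 ≤ S
        · nlinarith
        · exact absurd (by simp [sgn, h0]) hω
    have hsum : ∑ j, -(y * ((1/2) * Real.log (p j / (1 - p j)) * Z j ω)) = -(y * S) := by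
      rw [hS, Finset.mul_sum, ← Finset.sum_neg_distrib]
    have hprodeq : ∏ j, g j ω = ENNReal.ofReal (Real.exp (-(y * S))) := by
      simp only [hgdef]
      rw [← ENNReal.ofReal_prod_of_nonneg (fun j _ => (Real.exp_pos _).le)]
      congr 1
      rw [← Real.exp_sum, hsum]
    rw [hprodeq]
    exact ENNReal.one_le_ofReal.mpr (Real.one_le_exp (by linarith))
  -- Step 2: Markov
  have hmarkov : μ {ω | 1 ≤ ∏ j, g j ω} ≤ ∫⁻ ω, ∏ j, g j ω ∂μ := by
    have := mul_meas_ge_le_lintegral₀ (μ := μ) (f := fun ω => ∏ j, g j ω)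
      ((Finset.measurable_prod _ (fun j _ => hgmeas j)).aemeasurable) 1
    simpa using this
  -- Step 4: per-coordinate bound
  have hcoord : ∀ j, ∫⁻ ω, g j ω ∂μ ≤ ENNReal.ofReal (Real.exp (-2 * (1/2 - p j)^2)) := by
    intro j
    obtain ⟨hp0, hp1⟩ := hp j
    set A : Set Ω := {ω | Z j ω = y} with hA
    have hAmeas : MeasurableSet A := (hZmeas j) (measurableSet_singleton y)
    have hgval : ∀ ω, g j ω = if ω ∈ A then
        ENNReal.ofReal (Real.exp (-((1/2) * Real.log (p j / (1 - p j)))))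
        else ENNReal.ofReal (Real.exp ((1/2) * Real.log (p j / (1 - p j)))) := by
      intro ω
      by_cases hωA : ω ∈ A
      · have hZy : Z j ω = y := hωA
        have hexp : -(y * ((1/2) * Real.log (p j / (1 - p j)) * Z j ω))
            = -((1/2) * Real.log (p j / (1 - p j))) := by
          rw [hZy, show y * ((1/2) * Real.log (p j / (1 - p j)) * y)
              = (1/2) * Real.log (p j / (1 - p j)) * (y * y) by ring, hy2, mul_one]
        simp only [hgdef, hexp, if_pos hωA]
      · have hωA' : Z j ω ≠ y := hωA
        have hZy : Z j ω = -y := by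
          rcases hy with h | h <;> rcases hZval j ω with h2 | h2 <;> simp_all
        have hexp : -(y * ((1/2) * Real.log (p j / (1 - p j)) * Z j ω))
            = (1/2) * Real.log (p j / (1 - p j)) := by
          rw [hZy, show -(y * ((1/2) * Real.log (p j / (1 - p j)) * -y))
              = (1/2) * Real.log (p j / (1 - p j)) * (y * y) by ring, hy2, mul_one]
        simp only [hgdef, hexp, if_neg hωA]
    have hμA : μ A = ENNReal.ofReal (p j) := hprob j
    have hμAc : μ Aᶜ = ENNReal.ofReal (1 - p j) := by
      rw [measure_compl hAmeas (measure_ne_top μ A), hμA, measure_univ,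
        ← ENNReal.ofReal_one]
      exact (ENNReal.ofReal_sub 1 hp0.le).symm
    have hsplit : ∫⁻ ω, g j ω ∂μ
        = ENNReal.ofReal (Real.exp (-((1/2) * Real.log (p j / (1 - p j))))) * μ A
          + ENNReal.ofReal (Real.exp ((1/2) * Real.log (p j / (1 - p j)))) * μ Aᶜ := by
      rw [← lintegral_add_compl _ hAmeas]
      congr 1
      · rw [setLIntegral_congr_fun_ae hAmeas (Filter.Eventually.of_forall fun ω hω => by
          rw [hgval ω, if_pos hω]), setLIntegral_const]
      · rw [setLIntegral_congr_fun_ae hAmeas.compl (Filter.Eventually.of_forall fun ω hω => by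
          rw [hgval ω, if_neg hω]), setLIntegral_const]
    rw [hsplit, hμA, hμAc, ← ENNReal.ofReal_mul (Real.exp_pos _).le,
      ← ENNReal.ofReal_mul (Real.exp_pos _).le,
      ← ENNReal.ofReal_add (mul_nonneg (Real.exp_pos _).le hp0.le)
        (mul_nonneg (Real.exp_pos _).le (by linarith : (0:ℝ) ≤ 1 - p j))]
    exact ENNReal.ofReal_le_ofReal (my_key_real ⟨hp0, hp1⟩)
  calc μ {ω | sgn (∑ j, (1/2) * Real.log (p j / (1 - p j)) * Z j ω) ≠ y}
      ≤ μ {ω | 1 ≤ ∏ j, g j ω} := measure_mono hsub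
    _ ≤ ∫⁻ ω, ∏ j, g j ω ∂μ := hmarkov
    _ = ∏ j, ∫⁻ ω, g j ω ∂μ := my_lintegral_prod μ g hgmeas hgind Finset.univ
    _ ≤ ∏ j, ENNReal.ofReal (Real.exp (-2 * (1/2 - p j)^2)) :=
        Finset.prod_le_prod' (fun j _ => hcoord j)
    _ = ENNReal.ofReal (Real.exp (-2 * ∑ j, (1/2 - p j)^2)) := by
        rw [← ENNReal.ofReal_prod_of_nonneg (fun j _ => (Real.exp_pos _).le), ← Real.exp_sum]
        congr 1
        rw [Finset.mul_sum]

end
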